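/- Let i ≥ 1 and suppose χ_i := q11^{i²}·q12^i·q21^i·q22 satisfies χ_i² + χ_i + 1 = 0. Then (D₁^{i-1} ∘ D₂)(z_i³) = c_i·z_{i,1}, where z_{i,1} := z_{i+1}·z_i − q11^{i(i+1)}·q12^{i+1}·q21^i·q22·z_i·z_{i+1} and c_i := q21^{-i}·b_i·[i]!_{q11^{-1}}. -/

import Mathlib

noncomputable section

variable {k : Type*} [Field k]

/-- The algebra endomorphism of the free algebra on two generators with
`x1 ↦ a • x1`, `x2 ↦ b • x2`. -/
def alph (a b : k) : FreeAlgebra k (Fin 2) →ₐ[k] FreeAlgebra k (Fin 2) :=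
  FreeAlgebra.lift k ![a • FreeAlgebra.ι k 0, b • FreeAlgebra.ι k 1]

/-- The elements `z_i`, defined by `z_0 = x2`, `z_{i+1} = x1·z_i − q11^i·q12·z_i·x1`. -/
def zz (q11 q12 : k) : ℕ → FreeAlgebra k (Fin 2)
  | 0 => FreeAlgebra.ι k 1
  | (i + 1) => FreeAlgebra.ι k 0 * zz q11 q12 i
      - (q11 ^ i * q12) • (zz q11 q12 i * FreeAlgebra.ι k 0)

/-- The elements `u_i`, defined by `u_0 = x1`, `u_{i+1} = u_i·x2 − q12·q22^i·x2·u_i`. -/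
def uu (q12 q22 : k) : ℕ → FreeAlgebra k (Fin 2)
  | 0 => FreeAlgebra.ι k 0
  | (i + 1) => uu q12 q22 i * FreeAlgebra.ι k 1
      - (q12 * q22 ^ i) • (FreeAlgebra.ι k 1 * uu q12 q22 i)

/-- The q-number `[m]_p = 1 + p + ⋯ + p^{m-1}`. -/
def qnum (p : k) (m : ℕ) : k := ∑ j ∈ Finset.range m, p ^ j

/-- The q-factorial `[m]!_p = [1]_p·[2]_p⋯[m]_p`. -/
def qfact (p : k) (m : ℕ) : k := ∏ l ∈ Finset.range m, qnum p (l + 1)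

/-- `b_i = ∏_{j=0}^{i-1} (1 − q11^j·q12·q21)`. -/
def bb (q11 q12 q21 : k) (i : ℕ) : k :=
  ∏ j ∈ Finset.range i, (1 - q11 ^ j * q12 * q21)

/-- `c_i = q21^{-i}·b_i·[i]!_{q11⁻¹}`. -/
def cc (q11 q12 q21 : k) (i : ℕ) : k :=
  q21⁻¹ ^ i * bb q11 q12 q21 i * qfact q11⁻¹ i

/-- `d_{i,0}`. -/
def dd (q11 q12 q21 q22 : k) (i : ℕ) : k :=
  q21⁻¹ * (1 - q11 ^ i * q12 * q21) * qnum q11⁻¹ (i + 1)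
    + (q11 ^ (i * (i + 1)) * q12 ^ i * q21 ^ (i + 1) * q22)⁻¹
    - q11 ^ (i * (i + 1)) * q12 ^ (i + 1) * q21 ^ i * q22

lemma alph_i0 (a b : k) : alph a b (FreeAlgebra.ι k 0) = a • FreeAlgebra.ι k 0 := by
  simp [alph]

lemma alph_i1 (a b : k) : alph a b (FreeAlgebra.ι k 1) = b • FreeAlgebra.ι k 1 := by
  simp [alph]

lemma alph_zz (q11 q12 a b : k) (i : ℕ) :
    alph a b (zz q11 q12 i) = (a ^ i * b) • zz q11 q12 i := by
  induction i with
  | zero => simpa [zz] using alph_i1 a b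
  | succ n ih =>
    simp only [zz, map_sub, map_mul, map_smul, ih, alph_i0, mul_smul_comm, smul_mul_assoc]
    match_scalars <;> ring

lemma iter_smul {M : Type*} [AddCommMonoid M] [Module k M]
    (D : M →ₗ[k] M) (m : ℕ) (c : k) (x : M) :
    (⇑D)^[m] (c • x) = c • (⇑D)^[m] x := by
  induction m generalizing x with
  | zero => rfl
  | succ n ih => rw [Function.iterate_succ_apply, Function.iterate_succ_apply, map_smul, ih]

lemma iter_add {M : Type*} [AddCommMonoid M] [Module k M]
    (D : M →ₗ[k] M) (m : ℕ) (x y : M) :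
    (⇑D)^[m] (x + y) = (⇑D)^[m] x + (⇑D)^[m] y := by
  induction m generalizing x y with
  | zero => rfl
  | succ n ih => rw [Function.iterate_succ_apply, Function.iterate_succ_apply,
      Function.iterate_succ_apply, map_add, ih]

lemma qnum_one (p : k) : qnum p 1 = 1 := by simp [qnum]

lemma qnum_succ (p : k) (m : ℕ) : qnum p (m + 1) = p * qnum p m + 1 := by
  simp [qnum, geom_sum_succ]

lemma qfact_shift (p : k) (m : ℕ) :
    ∏ l ∈ Finset.range m, qnum p (l + 2) = qfact p (m + 1) := by
  rw [qfact, Finset.prod_range_succ']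
  simp [qnum_one]

section D
variable (q11 q12 q21 q22 : k)
variable (D1 : FreeAlgebra k (Fin 2) →ₗ[k] FreeAlgebra k (Fin 2))
  (hD1one : D1 1 = 0)
  (hD1x1 : D1 (FreeAlgebra.ι k 0) = 1)
  (hD1x2 : D1 (FreeAlgebra.ι k 1) = 0)
  (hD1mul : ∀ a b : FreeAlgebra k (Fin 2),
      D1 (a * b) = D1 a * b + alph q11⁻¹ q12⁻¹ a * D1 b)

include hD1x1 hD1x2 hD1mul in
lemma D1_zz (hq11 : q11 ≠ 0) (hq12 : q12 ≠ 0) (i : ℕ) : D1 (zz q11 q12 i) = 0 := by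
  induction i with
  | zero => exact hD1x2
  | succ n ih =>
    rw [zz, map_sub, map_smul, hD1mul, hD1mul, ih, hD1x1, alph_zz]
    simp only [mul_zero, zero_mul, one_mul, add_zero, zero_add, mul_one, smul_smul]
    rw [inv_pow, show q11 ^ n * q12 * ((q11 ^ n)⁻¹ * q12⁻¹) = 1 by field_simp,
      one_smul, sub_self]

include hD1one hD1x1 hD1x2 hD1mul in
lemma D1_zz_pow (hq11 : q11 ≠ 0) (hq12 : q12 ≠ 0) (i b : ℕ) :
    D1 (zz q11 q12 i ^ b) = 0 := by
  induction b with
  | zero => simpa using hD1one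
  | succ n ih =>
    rw [pow_succ, hD1mul, ih, D1_zz q11 q12 D1 hD1x1 hD1x2 hD1mul hq11 hq12,
      zero_mul, mul_zero, add_zero]

include hD1x1 hD1mul in
lemma D1_xpow (m : ℕ) :
    D1 (FreeAlgebra.ι k 0 ^ (m + 1)) = qnum q11⁻¹ (m + 1) • FreeAlgebra.ι k 0 ^ m := by
  induction m with
  | zero => simpa [qnum_one] using hD1x1
  | succ n ih =>
    rw [pow_succ' _ (n + 1), hD1mul, hD1x1, ih, alph_i0, one_mul, smul_mul_assoc,
      mul_smul_comm, smul_smul, qnum_succ q11⁻¹ (n + 1), ← pow_succ']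
    match_scalars <;> ring

include hD1one hD1x1 hD1x2 hD1mul in
lemma D1_sandwich (hq11 : q11 ≠ 0) (hq12 : q12 ≠ 0) (i a b m : ℕ) :
    D1 (zz q11 q12 i ^ a * FreeAlgebra.ι k 0 ^ (m + 1) * zz q11 q12 i ^ b)
      = (((q11⁻¹ ^ i * q12⁻¹) ^ a) * qnum q11⁻¹ (m + 1))
          • (zz q11 q12 i ^ a * FreeAlgebra.ι k 0 ^ m * zz q11 q12 i ^ b) := by
  rw [mul_assoc, hD1mul, D1_zz_pow q11 q12 D1 hD1one hD1x1 hD1x2 hD1mul hq11 hq12,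
    hD1mul, D1_zz_pow q11 q12 D1 hD1one hD1x1 hD1x2 hD1mul hq11 hq12,
    D1_xpow q11 q12 D1 hD1x1 hD1mul, map_pow, alph_zz, smul_pow, mul_zero, add_zero,
    zero_mul, zero_add, smul_mul_assoc, smul_mul_assoc, mul_smul_comm, smul_smul, mul_assoc]

include hD1one hD1x1 hD1x2 hD1mul in
lemma D1_iter (hq11 : q11 ≠ 0) (hq12 : q12 ≠ 0) (i a b : ℕ) : ∀ m : ℕ,
    (⇑D1)^[m] (zz q11 q12 i ^ a * FreeAlgebra.ι k 0 ^ (m + 1) * zz q11 q12 i ^ b)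
      = ((((q11⁻¹ ^ i * q12⁻¹) ^ a) ^ m * ∏ l ∈ Finset.range m, qnum q11⁻¹ (l + 2))
          • (zz q11 q12 i ^ a * FreeAlgebra.ι k 0 * zz q11 q12 i ^ b)) := by
  intro m
  induction m with
  | zero => simp
  | succ n ih =>
    rw [Function.iterate_succ_apply,
      D1_sandwich q11 q12 D1 hD1one hD1x1 hD1x2 hD1mul hq11 hq12 i a b (n + 1),
      iter_smul, ih, smul_smul, Finset.prod_range_succ]
    match_scalars <;> ring

variable (D2 : FreeAlgebra k (Fin 2) →ₗ[k] FreeAlgebra k (Fin 2))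
  (hD2x1 : D2 (FreeAlgebra.ι k 0) = 0)
  (hD2x2 : D2 (FreeAlgebra.ι k 1) = 1)
  (hD2mul : ∀ a b : FreeAlgebra k (Fin 2),
      D2 (a * b) = D2 a * b + alph q21⁻¹ q22⁻¹ a * D2 b)

include hD2x1 hD2x2 hD2mul in
lemma D2_zz (hq21 : q21 ≠ 0) (i : ℕ) :
    D2 (zz q11 q12 i) = (q21⁻¹ ^ i * bb q11 q12 q21 i) • FreeAlgebra.ι k 0 ^ i := by
  induction i with
  | zero => simpa [zz, bb] using hD2x2
  | succ n ih =>
    rw [zz, map_sub, map_smul, hD2mul, hD2mul, ih, hD2x1, alph_i0, alph_zz]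
    simp only [zero_mul, mul_zero, zero_add, add_zero, mul_one, smul_mul_assoc,
      mul_smul_comm, smul_smul, ← pow_succ, ← pow_succ']
    rw [show bb q11 q12 q21 (n + 1) = bb q11 q12 q21 n * (1 - q11 ^ n * q12 * q21) from
      Finset.prod_range_succ _ _, bb]
    match_scalars
    generalize (∏ j ∈ Finset.range n, (1 - q11 ^ j * q12 * q21)) = P
    field_simp
    linear_combination (q21 * q21⁻¹ ^ n * P * q11 ^ n * q12 - q21⁻¹ ^ n * P) * mul_inv_cancel₀ hq21
end D


theorem D1_pow_D2_z_cube
    (q11 q12 q21 q22 : k)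
    (hq11 : q11 ≠ 0) (hq12 : q12 ≠ 0) (hq21 : q21 ≠ 0) (hq22 : q22 ≠ 0)
    (D1 : FreeAlgebra k (Fin 2) →ₗ[k] FreeAlgebra k (Fin 2))
    (hD1one : D1 1 = 0)
    (hD1x1 : D1 (FreeAlgebra.ι k 0) = 1)
    (hD1x2 : D1 (FreeAlgebra.ι k 1) = 0)
    (hD1mul : ∀ a b : FreeAlgebra k (Fin 2),
      D1 (a * b) = D1 a * b + alph q11⁻¹ q12⁻¹ a * D1 b)
    (D2 : FreeAlgebra k (Fin 2) →ₗ[k] FreeAlgebra k (Fin 2))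
    (hD2one : D2 1 = 0)
    (hD2x1 : D2 (FreeAlgebra.ι k 0) = 0)
    (hD2x2 : D2 (FreeAlgebra.ι k 1) = 1)
    (hD2mul : ∀ a b : FreeAlgebra k (Fin 2),
      D2 (a * b) = D2 a * b + alph q21⁻¹ q22⁻¹ a * D2 b)
    (i : ℕ) (hi : 1 ≤ i)
    (hchi : (q11 ^ (i ^ 2) * q12 ^ i * q21 ^ i * q22) ^ 2
        + q11 ^ (i ^ 2) * q12 ^ i * q21 ^ i * q22 + 1 = 0) :
    (⇑D1)^[i - 1] (D2 (zz q11 q12 i ^ 3))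
      = cc q11 q12 q21 i • (zz q11 q12 (i + 1) * zz q11 q12 i
          - (q11 ^ (i * (i + 1)) * q12 ^ (i + 1) * q21 ^ i * q22)
              • (zz q11 q12 i * zz q11 q12 (i + 1))) := by
  obtain ⟨m, rfl⟩ : ∃ m, i = m + 1 := ⟨i - 1, (Nat.succ_pred_eq_of_pos hi).symm⟩
  have hβ := D2_zz q11 q12 q21 q22 D2 hD2x1 hD2x2 hD2mul hq21 (m + 1)
  have hγ : alph q21⁻¹ q22⁻¹ (zz q11 q12 (m + 1))
      = (q21⁻¹ ^ (m + 1) * q22⁻¹) • zz q11 q12 (m + 1) := alph_zz _ _ _ _ _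
  have h3 : D2 (zz q11 q12 (m + 1) ^ 3)
      = (q21⁻¹ ^ (m + 1) * bb q11 q12 q21 (m + 1)) •
          (zz q11 q12 (m + 1) ^ 0 * FreeAlgebra.ι k 0 ^ (m + 1) * zz q11 q12 (m + 1) ^ 2)
        + ((q21⁻¹ ^ (m + 1) * q22⁻¹) * (q21⁻¹ ^ (m + 1) * bb q11 q12 q21 (m + 1))) •
          (zz q11 q12 (m + 1) ^ 1 * FreeAlgebra.ι k 0 ^ (m + 1) * zz q11 q12 (m + 1) ^ 1)
        + ((q21⁻¹ ^ (m + 1) * q22⁻¹) * ((q21⁻¹ ^ (m + 1) * q22⁻¹) *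
              (q21⁻¹ ^ (m + 1) * bb q11 q12 q21 (m + 1)))) •
          (zz q11 q12 (m + 1) ^ 2 * FreeAlgebra.ι k 0 ^ (m + 1) * zz q11 q12 (m + 1) ^ 0) := by
    rw [show zz q11 q12 (m + 1) ^ 3
        = zz q11 q12 (m + 1) * (zz q11 q12 (m + 1) * zz q11 q12 (m + 1)) by
      rw [pow_succ', pow_succ', pow_one], hD2mul, hD2mul, hβ, hγ]
    simp only [pow_zero, pow_one, pow_two, one_mul, mul_one, smul_mul_assoc,
      mul_smul_comm, smul_smul, mul_add, smul_add, mul_assoc]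
    match_scalars <;> ring
  have hiter := fun (a b : ℕ) =>
    D1_iter q11 q12 D1 hD1one hD1x1 hD1x2 hD1mul hq11 hq12 (m + 1) a b m
  simp only [Nat.add_sub_cancel]
  rw [h3, iter_add, iter_add, iter_smul, iter_smul, iter_smul, hiter 0 2, hiter 1 1,
    hiter 2 0, qfact_shift,
    show zz q11 q12 (m + 1 + 1) = FreeAlgebra.ι k 0 * zz q11 q12 (m + 1)
      - (q11 ^ (m + 1) * q12) • (zz q11 q12 (m + 1) * FreeAlgebra.ι k 0) from rfl]
  have hχ0 : q11 ^ ((m + 1) ^ 2) * q12 ^ (m + 1) * q21 ^ (m + 1) * q22 ≠ 0 :=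
    mul_ne_zero (mul_ne_zero (mul_ne_zero (pow_ne_zero _ hq11) (pow_ne_zero _ hq12))
      (pow_ne_zero _ hq21)) hq22
  have he : (q21⁻¹ ^ (m + 1) * q22⁻¹ * (q11⁻¹ ^ (m + 1) * q12⁻¹) ^ m)
      * (q11 ^ ((m + 1) ^ 2) * q12 ^ (m + 1) * q21 ^ (m + 1) * q22)
      = q11 ^ (m + 1) * q12 := by
    field_simp
    calc _ = (q21 * q21⁻¹) * (q21 * q21⁻¹) ^ m * (q11 * q11⁻¹) ^ m * (q11 * q11⁻¹) ^ (m ^ 2)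
          * (q12 * q12⁻¹) ^ m * (q11 * q11 ^ m * q12) := by ring
      _ = q12 * q11 ^ (m + 1) := by
        simp only [mul_inv_cancel₀ hq11, mul_inv_cancel₀ hq12, mul_inv_cancel₀ hq21, one_pow,
          one_mul]
        ring
  have hcube : (q11 ^ ((m + 1) ^ 2) * q12 ^ (m + 1) * q21 ^ (m + 1) * q22) ^ 3 = 1 := by
    linear_combination (q11 ^ ((m + 1) ^ 2) * q12 ^ (m + 1) * q21 ^ (m + 1) * q22 - 1) * hchi
  have hs2 : q21⁻¹ ^ (m + 1) * q22⁻¹ * (q11⁻¹ ^ (m + 1) * q12⁻¹) ^ m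
      = -(q11 ^ (m + 1) * q12
          + q11 ^ ((m + 1) * (m + 1 + 1)) * q12 ^ (m + 1 + 1) * q21 ^ (m + 1) * q22) := by
    apply mul_right_cancel₀ hχ0
    rw [he]
    linear_combination (q11 ^ (m + 1) * q12) * hchi
  have hs3 : (q21⁻¹ ^ (m + 1) * q22⁻¹ * (q11⁻¹ ^ (m + 1) * q12⁻¹) ^ m) ^ 2
      = (q11 ^ ((m + 1) * (m + 1 + 1)) * q12 ^ (m + 1 + 1) * q21 ^ (m + 1) * q22)
          * (q11 ^ (m + 1) * q12) := by
    apply mul_right_cancel₀ (pow_ne_zero 2 hχ0)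
    rw [← mul_pow, he]
    linear_combination (-(q11 ^ (m + 1) * q12) ^ 2) * hcube
  simp only [cc, pow_zero, pow_one, one_pow, one_mul, mul_one, pow_two, smul_sub,
    smul_smul, mul_sub, sub_mul, smul_mul_assoc, mul_smul_comm, mul_assoc]
  match_scalars
  · ring
  · linear_combination (bb q11 q12 q21 (m + 1) * qfact q11⁻¹ (m + 1) * q21⁻¹ ^ (m + 1)) * hs2
  · linear_combination (bb q11 q12 q21 (m + 1) * qfact q11⁻¹ (m + 1) * q21⁻¹ ^ (m + 1)) * hs3
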